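/- Let κ ∈ [0,1] and let W̃ be a d×d complex matrix with a singular value decomposition W̃ = U·Σ·V†, with singular values σ_1, …, σ_d (the diagonal entries of Σ). Define W = U·Σ'·V†, where Σ' is the diagonal matrix with σ'_i = 1 if σ_i ∈ [1−κ, 1+κ] and σ'_i = σ_i otherwise. Then ‖W − W̃‖∞ ≤ κ, and W†W·v = v for every vector v in the span of those columns of V whose index i satisfies σ_i ∈ [1−κ, 1+κ]. -/

import Mathlib

open scoped Matrix Kronecker ComplexOrder

/-- The operator (spectral) norm of a square complex matrix. -/
noncomputable def opNorm {n : Type*} [Fintype n] [DecidableEq n] (A : Matrix n n ℂ) : ℝ :=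
  ‖Matrix.toEuclideanCLM (𝕜 := ℂ) A‖

/-- The square root of a positive semidefinite matrix (Mathlib's definition of Dec 2024). -/
noncomputable def Matrix.PosSemidef.sqrt {n : Type*} [Fintype n] [DecidableEq n] {A : Matrix n n ℂ}
    (hA : A.PosSemidef) : Matrix n n ℂ :=
  (hA.1.eigenvectorUnitary : Matrix n n ℂ) *
    Matrix.diagonal ((↑) ∘ (Real.sqrt ·) ∘ hA.1.eigenvalues) *
    (star hA.1.eigenvectorUnitary : Matrix n n ℂ)

/-- The trace norm `‖A‖₁ = Tr √(Aᴴ A)` of a square complex matrix. -/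
noncomputable def traceNorm {n : Type*} [Fintype n] [DecidableEq n] (A : Matrix n n ℂ) : ℝ :=
  ((Matrix.posSemidef_conjTranspose_mul_self A).sqrt.trace).re

/-- The (square-root) fidelity `F(ρ,σ) = ‖√ρ √σ‖₁` of positive semidefinite matrices. -/
noncomputable def fidelity {n : Type*} [Fintype n] [DecidableEq n] {ρ σ : Matrix n n ℂ}
    (hρ : ρ.PosSemidef) (hσ : σ.PosSemidef) : ℝ :=
  traceNorm (hρ.sqrt * hσ.sqrt)

/-- Functional calculus for a Hermitian matrix: `f(A) = Σ_i f(λ_i) |v_i⟩⟨v_i|`. -/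
noncomputable def matFun {n : Type*} [Fintype n] [DecidableEq n] {A : Matrix n n ℂ}
    (hA : A.IsHermitian) (f : ℝ → ℝ) : Matrix n n ℂ :=
  (hA.eigenvectorUnitary : Matrix n n ℂ) *
    Matrix.diagonal (fun i => (f (hA.eigenvalues i) : ℂ)) *
    (star (hA.eigenvectorUnitary : Matrix n n ℂ))

/-- Partial trace over the first tensor factor. -/
noncomputable def ptraceA {a b : Type*} [Fintype a] (X : Matrix (a × b) (a × b) ℂ) :
    Matrix b b ℂ :=
  Matrix.of fun i j => ∑ k, X (k, i) (k, j)

/-- Partial trace over the second tensor factor. -/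
noncomputable def ptraceB {a b : Type*} [Fintype b] (X : Matrix (a × b) (a × b) ℂ) :
    Matrix a a ℂ :=
  Matrix.of fun i j => ∑ k, X (i, k) (j, k)

/-- The outer product `|ψ⟩⟨φ|`. -/
def outer {a : Type*} (ψ φ : a → ℂ) : Matrix a a ℂ :=
  Matrix.of fun i j => ψ i * (starRingEnd ℂ) (φ j)

/-- The Euclidean norm of a finitely supported complex vector. -/
noncomputable def evnorm {a : Type*} [Fintype a] (v : a → ℂ) : ℝ :=
  Real.sqrt (∑ i, ‖v i‖ ^ 2)

open scoped Matrix.Norms.L2Operator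

lemma unitary_l2norm_le {n : Type*} [Fintype n] [DecidableEq n]
    (U : Matrix n n ℂ) (hU : U ∈ Matrix.unitaryGroup n ℂ) : ‖U‖ ≤ 1 := by
  have h : Uᴴ * U = 1 := by
    rw [← Matrix.star_eq_conjTranspose]; exact hU.1
  have h2 : ‖U‖ * ‖U‖ = ‖(1 : Matrix n n ℂ)‖ := by
    rw [← Matrix.l2_opNorm_conjTranspose_mul_self, h]
  have h3 : ‖(1 : Matrix n n ℂ)‖ ≤ 1 := by
    rw [Matrix.cstar_norm_def, map_one]
    exact ContinuousLinearMap.norm_id_le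
  nlinarith [norm_nonneg U]

lemma diagonal_l2norm_le {n : Type*} [Fintype n] [DecidableEq n]
    (δ : n → ℂ) (κ : ℝ) (hκ : 0 ≤ κ) (hδ : ∀ i, ‖δ i‖ ≤ κ) :
    ‖Matrix.diagonal δ‖ ≤ κ := by
  rw [Matrix.cstar_norm_def]
  apply ContinuousLinearMap.opNorm_le_bound _ hκ
  intro x
  have hx : ∀ i, (Matrix.toEuclideanCLM (𝕜 := ℂ) (Matrix.diagonal δ) x) i = δ i * x i := by
    intro i
    have := congrFun (Matrix.ofLp_toEuclideanCLM (Matrix.diagonal δ) x) i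
    simpa [Matrix.toLin'_apply, Matrix.mulVec_diagonal] using this
  rw [EuclideanSpace.norm_eq, EuclideanSpace.norm_eq]
  rw [← Real.sqrt_sq hκ, ← Real.sqrt_mul (by positivity)]
  apply Real.sqrt_le_sqrt
  rw [Finset.mul_sum]
  apply Finset.sum_le_sum
  intro i _
  rw [hx i, norm_mul, mul_pow]
  have h2 : ‖δ i‖ ^ 2 ≤ κ ^ 2 := by nlinarith [norm_nonneg (δ i), hδ i]
  exact mul_le_mul_of_nonneg_right h2 (sq_nonneg _)

set_option maxHeartbeats 1000000 in
/-- Rounding singular values near `1` to exactly `1`: if `Wt = U Σ V†` and `W = U Σ' V†` where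
`Σ'` replaces every singular value in `[1−κ, 1+κ]` by `1`, then `‖W − Wt‖∞ ≤ κ`, and
`W†W v = v` for every `v` in the span of the columns of `V` whose singular value lies in
`[1−κ, 1+κ]`. -/
theorem round_singular_values (d : ℕ) (κ : ℝ) (hκ0 : 0 ≤ κ) (hκ1 : κ ≤ 1)
    (Wt U V : Matrix (Fin d) (Fin d) ℂ)
    (hU : U ∈ Matrix.unitaryGroup (Fin d) ℂ) (hV : V ∈ Matrix.unitaryGroup (Fin d) ℂ)
    (s : Fin d → ℝ) (hs : ∀ i, 0 ≤ s i)
    (hSVD : Wt = U * Matrix.diagonal (fun i => (s i : ℂ)) * Vᴴ)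
    (W : Matrix (Fin d) (Fin d) ℂ)
    (hW : W = U * Matrix.diagonal
      (fun i => if 1 - κ ≤ s i ∧ s i ≤ 1 + κ then (1 : ℂ) else (s i : ℂ)) * Vᴴ) :
    opNorm (W - Wt) ≤ κ ∧
      ∀ v ∈ Submodule.span ℂ
          ((fun i : Fin d => (fun j : Fin d => V j i)) '' {i | 1 - κ ≤ s i ∧ s i ≤ 1 + κ}),
        (Wᴴ * W) *ᵥ v = v := by
  subst hSVD hW
  set σ' : Fin d → ℂ :=
    fun i => if 1 - κ ≤ s i ∧ s i ≤ 1 + κ then (1 : ℂ) else (s i : ℂ) with hσ'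
  have hUU : Uᴴ * U = 1 := by rw [← Matrix.star_eq_conjTranspose]; exact hU.1
  have hVV : Vᴴ * V = 1 := by rw [← Matrix.star_eq_conjTranspose]; exact hV.1
  constructor
  · -- operator norm bound
    have hδ : ∀ i, ‖σ' i - (s i : ℂ)‖ ≤ κ := by
      intro i
      by_cases h : 1 - κ ≤ s i ∧ s i ≤ 1 + κ
      · simp only [hσ', if_pos h]
        rw [show (1 : ℂ) - (s i : ℂ) = ((1 - s i : ℝ) : ℂ) by push_cast; ring,
          Complex.norm_real, Real.norm_eq_abs, abs_le]
        constructor <;> linarith [h.1, h.2]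
      · simp only [hσ']
        rw [if_neg h, sub_self, norm_zero]
        exact hκ0
    have key : U * Matrix.diagonal σ' * Vᴴ - U * Matrix.diagonal (fun i => (s i : ℂ)) * Vᴴ
        = U * Matrix.diagonal (fun i => σ' i - (s i : ℂ)) * Vᴴ := by
      have hdiag : Matrix.diagonal (fun i => σ' i - (s i : ℂ))
          = Matrix.diagonal σ' - Matrix.diagonal (fun i => (s i : ℂ)) := by
        ext j k
        by_cases h : j = k
        · subst h; simp
        · simp [Matrix.diagonal_apply_ne _ h]
      rw [hdiag, Matrix.mul_sub, Matrix.sub_mul]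
    have hnorm : opNorm (U * Matrix.diagonal σ' * Vᴴ
        - U * Matrix.diagonal (fun i => (s i : ℂ)) * Vᴴ)
        = ‖U * Matrix.diagonal (fun i => σ' i - (s i : ℂ)) * Vᴴ‖ := by
      rw [key]; rfl
    rw [hnorm]
    have hU1 : ‖U‖ ≤ 1 := unitary_l2norm_le U hU
    have hV1 : ‖Vᴴ‖ ≤ 1 := by
      apply unitary_l2norm_le
      rw [← Matrix.star_eq_conjTranspose]
      exact Unitary.star_mem hV
    have hD : ‖Matrix.diagonal (fun i => σ' i - (s i : ℂ))‖ ≤ κ :=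
      diagonal_l2norm_le _ κ hκ0 hδ
    calc ‖U * Matrix.diagonal (fun i => σ' i - (s i : ℂ)) * Vᴴ‖
        ≤ ‖U * Matrix.diagonal (fun i => σ' i - (s i : ℂ))‖ * ‖Vᴴ‖ :=
          Matrix.l2_opNorm_mul _ _
      _ ≤ (‖U‖ * ‖Matrix.diagonal (fun i => σ' i - (s i : ℂ))‖) * 1 :=
          mul_le_mul (Matrix.l2_opNorm_mul _ _) hV1 (norm_nonneg _) (by positivity)
      _ = ‖U‖ * ‖Matrix.diagonal (fun i => σ' i - (s i : ℂ))‖ := mul_one _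
      _ ≤ 1 * κ := mul_le_mul hU1 hD (norm_nonneg _) zero_le_one
      _ = κ := one_mul κ
  · -- eigenvector property
    set Wm := U * Matrix.diagonal σ' * Vᴴ with hWm
    have cancelU : ∀ X : Matrix (Fin d) (Fin d) ℂ, Uᴴ * (U * X) = X := fun X => by
      rw [← Matrix.mul_assoc, hUU, Matrix.one_mul]
    have hprod : (Wmᴴ * Wm) * V = V * Matrix.diagonal (star σ' * σ') := by
      simp only [hWm, Matrix.conjTranspose_mul, Matrix.conjTranspose_conjTranspose,
        Matrix.mul_assoc]
      rw [hVV, Matrix.mul_one, cancelU, Matrix.diagonal_conjTranspose,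
        Matrix.diagonal_mul_diagonal]
      rfl
    have hspan : Submodule.span ℂ
        ((fun i : Fin d => (fun j : Fin d => V j i)) '' {i | 1 - κ ≤ s i ∧ s i ≤ 1 + κ})
        ≤ LinearMap.eqLocus (Matrix.mulVecLin (Wmᴴ * Wm)) LinearMap.id := by
      rw [Submodule.span_le]
      rintro _ ⟨i, hi, rfl⟩
      rw [SetLike.mem_coe, LinearMap.mem_eqLocus, Matrix.mulVecLin_apply, LinearMap.id_apply]
      show (Wmᴴ * Wm) *ᵥ (fun j => V j i) = (fun j => V j i)
      have hcol : (fun j => V j i) = V *ᵥ Pi.single i 1 := by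
        rw [Matrix.mulVec_single_one]; rfl
      rw [hcol, Matrix.mulVec_mulVec, hprod, ← Matrix.mulVec_mulVec,
        Matrix.diagonal_mulVec_single]
      have h1 : (star σ' * σ') i * 1 = 1 := by
        have hone : σ' i = 1 := by simp only [hσ']; exact if_pos (Set.mem_setOf.mp hi)
        simp [Pi.mul_apply, Pi.star_apply, hone]
      rw [h1]
    intro v hv
    exact hspan hv
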